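/- Let G = ⟨s⟩ be a finite cyclic group and let φ, τ be two finite-dimensional irreducible representations of G over a finite field F. If the matrices φ(s) and τ(s) have an eigenvalue in common (in an algebraic closure of F), then φ and τ are equivalent, i.e. the corresponding F[G]-modules are isomorphic. -/

import Mathlib

open Polynomial

section Aux

variable {F : Type*} [Field F] {V : Type*} [AddCommGroup V] [Module F V]
  [FiniteDimensional F V]

/-- Evaluation of polynomials in an endomorphism at a fixed vector, as a linear map. -/
noncomputable def evalMap (A : Module.End F V) (v₀ : V) : Polynomial F →ₗ[F] V where
  toFun f := Polynomial.aeval A f v₀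
  map_add' f g := by simp
  map_smul' c f := by simp

lemma evalMap_apply (A : Module.End F V) (v₀ : V) (f : Polynomial F) :
    evalMap A v₀ f = Polynomial.aeval A f v₀ := rfl

lemma aux_comm (A : Module.End F V) (q : Polynomial F) :
    (Polynomial.aeval A q) * A = A * (Polynomial.aeval A q) := by
  calc (Polynomial.aeval A q) * A = Polynomial.aeval A (q * X) := by simp
    _ = Polynomial.aeval A (X * q) := by rw [mul_comm]
    _ = A * (Polynomial.aeval A q) := by simp

lemma minpoly_irred [Nontrivial V] (A : Module.End F V)
    (hA : ∀ p : Submodule F V, (∀ v ∈ p, A v ∈ p) → p = ⊥ ∨ p = ⊤) :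
    Irreducible (minpoly F A) := by
  have hint : IsIntegral F A := LinearMap.isIntegral A
  have h0 : minpoly F A ≠ 0 := minpoly.ne_zero hint
  have hnu : ¬ IsUnit (minpoly F A) := minpoly.not_isUnit F A
  obtain ⟨q, hq, hdvd⟩ := WfDvdMonoid.exists_irreducible_factor hnu h0
  obtain ⟨h, hh⟩ := hdvd
  have hq0 : q ≠ 0 := hq.ne_zero
  have hh0 : h ≠ 0 := by rintro rfl; rw [mul_zero] at hh; exact h0 hh
  have hqd : 0 < q.natDegree := hq.natDegree_pos
  -- h(A) ≠ 0
  have hhA : Polynomial.aeval A h ≠ 0 := by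
    intro hz
    have hdvd' : minpoly F A ∣ h := minpoly.dvd F A hz
    have h1 : (minpoly F A).natDegree ≤ h.natDegree :=
      Polynomial.natDegree_le_of_dvd hdvd' hh0
    have h2 : (minpoly F A).natDegree = q.natDegree + h.natDegree := by
      rw [hh, Polynomial.natDegree_mul hq0 hh0]
    omega
  obtain ⟨v, hv⟩ : ∃ v, Polynomial.aeval A h v ≠ 0 := by
    by_contra hc
    push_neg at hc
    exact hhA (LinearMap.ext hc)
  have hker : LinearMap.ker (Polynomial.aeval A q) = ⊤ := by
    have hinv : ∀ w ∈ LinearMap.ker (Polynomial.aeval A q),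
        A w ∈ LinearMap.ker (Polynomial.aeval A q) := by
      intro w hw
      rw [LinearMap.mem_ker] at hw ⊢
      rw [← Module.End.mul_apply, aux_comm, Module.End.mul_apply, hw, map_zero]
    rcases hA (LinearMap.ker (Polynomial.aeval A q)) hinv with hbot | htop
    · exfalso
      apply hv
      have hmem : Polynomial.aeval A h v ∈ LinearMap.ker (Polynomial.aeval A q) := by
        rw [LinearMap.mem_ker, ← Module.End.mul_apply, ← map_mul, ← hh, minpoly.aeval,
          LinearMap.zero_apply]
      rw [hbot] at hmem
      simpa using hmem
    · exact htop
  have hq0' : Polynomial.aeval A q = 0 := LinearMap.ker_eq_top.mp hker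
  have h2 : minpoly F A ∣ q := minpoly.dvd F A hq0'
  exact (associated_of_dvd_dvd h2 ⟨h, hh⟩).symm.irreducible hq

lemma evalMap_surjective [Nontrivial V] (A : Module.End F V)
    (hA : ∀ p : Submodule F V, (∀ v ∈ p, A v ∈ p) → p = ⊥ ∨ p = ⊤)
    {v₀ : V} (hv : v₀ ≠ 0) : Function.Surjective (evalMap A v₀) := by
  rw [← LinearMap.range_eq_top]
  have hinv : ∀ v ∈ LinearMap.range (evalMap A v₀), A v ∈ LinearMap.range (evalMap A v₀) := by
    rintro v ⟨f, rfl⟩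
    exact ⟨X * f, by simp [evalMap_apply, map_mul, Module.End.mul_apply]⟩
  rcases hA (LinearMap.range (evalMap A v₀)) hinv with hbot | htop
  · exfalso
    apply hv
    have hmem : v₀ ∈ LinearMap.range (evalMap A v₀) := ⟨1, by simp [evalMap_apply]⟩
    rw [hbot] at hmem
    simpa using hmem
  · exact htop

lemma evalMap_eq_zero_iff [Nontrivial V] (A : Module.End F V)
    (hirr : Irreducible (minpoly F A)) {v₀ : V} (hv : v₀ ≠ 0) (f : Polynomial F) :
    evalMap A v₀ f = 0 ↔ minpoly F A ∣ f := by
  have hmon : (minpoly F A).Monic := minpoly.monic (LinearMap.isIntegral A)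
  constructor
  · intro hf
    rw [← Polynomial.modByMonic_eq_zero_iff_dvd hmon]
    by_contra hr0
    have hrker : evalMap A v₀ (f %ₘ minpoly F A) = 0 := by
      have := Polynomial.modByMonic_add_div f (minpoly F A)
      have h1 : evalMap A v₀ (f %ₘ minpoly F A + minpoly F A * (f /ₘ minpoly F A)) = 0 := by
        rw [this]; exact hf
      rw [map_add] at h1
      have h2 : evalMap A v₀ (minpoly F A * (f /ₘ minpoly F A)) = 0 := by
        simp [evalMap_apply, map_mul, Module.End.mul_apply, minpoly.aeval]
      rw [h2, add_zero] at h1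
      exact h1
    have hnd : ¬ minpoly F A ∣ (f %ₘ minpoly F A) := by
      intro hdvd
      have := Polynomial.degree_le_of_dvd hdvd hr0
      have := Polynomial.degree_modByMonic_lt f hmon
      exact absurd ‹(minpoly F A).degree ≤ (f %ₘ minpoly F A).degree›
        (not_le.mpr ‹(f %ₘ minpoly F A).degree < (minpoly F A).degree›)
    obtain ⟨a, b, hab⟩ := (hirr.coprime_iff_not_dvd.mpr hnd)
    have := congrArg (fun g => evalMap A v₀ g) hab
    simp only [map_add] at this
    have ha : evalMap A v₀ (a * minpoly F A) = 0 := by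
      simp [evalMap_apply, map_mul, Module.End.mul_apply, minpoly.aeval]
    have hb : evalMap A v₀ (b * (f %ₘ minpoly F A)) = 0 := by
      rw [evalMap_apply, map_mul, Module.End.mul_apply, ← evalMap_apply A v₀, hrker, map_zero]
    rw [ha, hb, zero_add] at this
    apply hv
    have : (0 : V) = evalMap A v₀ 1 := this
    rw [evalMap_apply] at this
    simpa using this.symm
  · rintro ⟨c, rfl⟩
    simp [evalMap_apply, map_mul, Module.End.mul_apply, minpoly.aeval]

lemma charpoly_eq_minpoly [Nontrivial V] (A : Module.End F V)
    (hA : ∀ p : Submodule F V, (∀ v ∈ p, A v ∈ p) → p = ⊥ ∨ p = ⊤) :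
    LinearMap.charpoly A = minpoly F A := by
  classical
  obtain ⟨v₀, hv₀⟩ := exists_ne (0 : V)
  have hirr := minpoly_irred A hA
  have hmon : (minpoly F A).Monic := minpoly.monic (LinearMap.isIntegral A)
  have hsurj := evalMap_surjective A hA hv₀
  set p := minpoly F A with hp
  set d := p.natDegree with hd
  have hd0 : 0 < d := by
    have := hirr.natDegree_pos
    omega
  -- the family A^i v₀, i < d, is a basis
  have hspan : ⊤ ≤ Submodule.span F (Set.range fun i : Fin d => (A ^ (i : ℕ)) v₀) := by
    intro v _
    obtain ⟨f, rfl⟩ := hsurj v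
    have hmod : evalMap A v₀ f = evalMap A v₀ (f %ₘ p) := by
      conv_lhs => rw [← Polynomial.modByMonic_add_div f p]
      rw [map_add]
      have : evalMap A v₀ (p * (f /ₘ p)) = 0 := by
        simp [evalMap_apply, map_mul, Module.End.mul_apply, hp, minpoly.aeval]
      rw [this, add_zero]
    rw [hmod]
    have hdeg : (f %ₘ p).natDegree < d := by
      rcases eq_or_ne (f %ₘ p) 0 with h | h
      · rw [h]; simpa using hd0
      · have := Polynomial.degree_modByMonic_lt f hmon
        exact Polynomial.natDegree_lt_natDegree h this
    rw [evalMap_apply, Polynomial.aeval_eq_sum_range' hdeg, LinearMap.sum_apply]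
    refine Submodule.sum_mem _ fun i hi => ?_
    rw [LinearMap.smul_apply]
    refine Submodule.smul_mem _ _ (Submodule.subset_span ?_)
    exact ⟨⟨i, Finset.mem_range.mp hi⟩, rfl⟩
  have hli : LinearIndependent F (fun i : Fin d => (A ^ (i : ℕ)) v₀) := by
    rw [Fintype.linearIndependent_iff]
    intro c hc j
    set r : Polynomial F := ∑ i : Fin d, Polynomial.C (c i) * X ^ (i : ℕ) with hr
    have hrv : evalMap A v₀ r = 0 := by
      rw [evalMap_apply, hr, map_sum, LinearMap.sum_apply]
      rw [← hc]
      refine Finset.sum_congr rfl fun i _ => ?_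
      rw [map_mul, Polynomial.aeval_C, Polynomial.aeval_X_pow, Module.End.mul_apply]
      simp [Module.algebraMap_end_apply]
    have hrdeg : r.degree < (d : ℕ) := by
      rw [hr]
      refine lt_of_le_of_lt (Polynomial.degree_sum_le _ _) ?_
      rw [Finset.sup_lt_iff (by exact_mod_cast WithBot.bot_lt_coe d)]
      intro i _
      refine lt_of_le_of_lt (Polynomial.degree_C_mul_X_pow_le _ _) ?_
      exact_mod_cast i.isLt
    have hr0 : r = 0 := by
      by_contra hr0
      have hdvd : p ∣ r := (evalMap_eq_zero_iff A hirr hv₀ r).mp hrv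
      have h1 := Polynomial.degree_le_of_dvd hdvd hr0
      have h2 : p.degree = (d : ℕ) := Polynomial.degree_eq_natDegree (hmon.ne_zero)
      rw [h2] at h1
      exact absurd (lt_of_le_of_lt h1 hrdeg) (lt_irrefl _)
    have hcoeff : r.coeff (j : ℕ) = c j := by
      rw [hr, Polynomial.finset_sum_coeff, Finset.sum_eq_single j]
      · simp [Polynomial.coeff_C_mul, Polynomial.coeff_X_pow]
      · intro i _ hij
        rw [Polynomial.coeff_C_mul, Polynomial.coeff_X_pow,
          if_neg (fun h => hij (Fin.val_injective h.symm)), mul_zero]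
      · intro h
        exact absurd (Finset.mem_univ j) h
    rw [hr0, Polynomial.coeff_zero] at hcoeff
    exact hcoeff.symm
  let b : Module.Basis (Fin d) F V := Module.Basis.mk hli hspan
  have hfr : Module.finrank F V = d := by
    rw [Module.finrank_eq_card_basis b, Fintype.card_fin]
  -- now conclude
  have hdvd : p ∣ LinearMap.charpoly A := LinearMap.minpoly_dvd_charpoly A
  obtain ⟨u, hu⟩ := hdvd
  have hc0 : LinearMap.charpoly A ≠ 0 := (LinearMap.charpoly_monic A).ne_zero
  have hu0 : u ≠ 0 := by rintro rfl; rw [mul_zero] at hu; exact hc0 hu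
  have hdu : u.natDegree = 0 := by
    have h1 : (LinearMap.charpoly A).natDegree = d := by
      rw [LinearMap.charpoly_natDegree, hfr]
    have h2 : (LinearMap.charpoly A).natDegree = d + u.natDegree := by
      rw [hu, Polynomial.natDegree_mul hmon.ne_zero hu0, ← hd]
    omega
  have hlc : u = Polynomial.C (u.coeff 0) := Polynomial.eq_C_of_natDegree_eq_zero hdu
  have hone : u.coeff 0 = 1 := by
    have := LinearMap.charpoly_monic A
    rw [hu, hlc] at this
    have h1 : (p * Polynomial.C (u.coeff 0)).leadingCoeff = 1 := this
    rw [Polynomial.leadingCoeff_mul, hmon.leadingCoeff, one_mul,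
      Polynomial.leadingCoeff_C] at h1
    exact h1
  rw [hu, hlc, hone, map_one, mul_one]

end Aux

theorem stmt11 {F : Type*} [Field F] [Fintype F]
    {G : Type*} [Group G] [Fintype G] (s : G)
    (hs : ∀ g : G, g ∈ Subgroup.zpowers s)
    {V W : Type*} [AddCommGroup V] [Module F V] [AddCommGroup W] [Module F W]
    [FiniteDimensional F V] [FiniteDimensional F W] [Nontrivial V] [Nontrivial W]
    (φ : Representation F G V) (τ : Representation F G W)
    (hφirr : ∀ p : Submodule F V, (∀ (g : G), ∀ v ∈ p, φ g v ∈ p) → p = ⊥ ∨ p = ⊤)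
    (hτirr : ∀ p : Submodule F W, (∀ (g : G), ∀ w ∈ p, τ g w ∈ p) → p = ⊥ ∨ p = ⊤)
    (hcommon : ∃ μ : AlgebraicClosure F,
      Polynomial.aeval μ (LinearMap.charpoly (φ s)) = 0 ∧
      Polynomial.aeval μ (LinearMap.charpoly (τ s)) = 0) :
    ∃ e : V ≃ₗ[F] W, ∀ (g : G) (v : V), e (φ g v) = τ g (e v) := by
  classical
  have hpow : ∀ g : G, ∃ n : ℕ, g = s ^ n := by
    intro g
    obtain ⟨n, hn⟩ := mem_powers_iff_mem_zpowers.mpr (hs g)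
    exact ⟨n, hn.symm⟩
  -- reduce invariance to invariance under φ s
  have hAinv : ∀ p : Submodule F V, (∀ v ∈ p, φ s v ∈ p) → p = ⊥ ∨ p = ⊤ := by
    intro p hp
    apply hφirr
    have hn : ∀ (n : ℕ), ∀ v ∈ p, ((φ s) ^ n) v ∈ p := by
      intro n
      induction n with
      | zero => intro v hv; simpa using hv
      | succ n ih =>
        intro v hv
        rw [pow_succ, Module.End.mul_apply]
        exact ih _ (hp v hv)
    intro g v hv
    obtain ⟨n, rfl⟩ := hpow g
    rw [map_pow]
    exact hn n v hv
  have hBinv : ∀ p : Submodule F W, (∀ w ∈ p, τ s w ∈ p) → p = ⊥ ∨ p = ⊤ := by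
    intro p hp
    apply hτirr
    have hn : ∀ (n : ℕ), ∀ w ∈ p, ((τ s) ^ n) w ∈ p := by
      intro n
      induction n with
      | zero => intro w hw; simpa using hw
      | succ n ih =>
        intro w hw
        rw [pow_succ, Module.End.mul_apply]
        exact ih _ (hp w hw)
    intro g w hw
    obtain ⟨n, rfl⟩ := hpow g
    rw [map_pow]
    exact hn n w hw
  have hirrA := minpoly_irred (φ s) hAinv
  have hirrB := minpoly_irred (τ s) hBinv
  -- the minimal polynomials coincide
  obtain ⟨μ, hμA, hμB⟩ := hcommon
  rw [charpoly_eq_minpoly (φ s) hAinv] at hμA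
  rw [charpoly_eq_minpoly (τ s) hBinv] at hμB
  have hEq : minpoly F (φ s) = minpoly F (τ s) := by
    have h1 : minpoly F (φ s) = minpoly F μ :=
      minpoly.eq_of_irreducible_of_monic hirrA hμA (minpoly.monic (LinearMap.isIntegral (φ s)))
    have h2 : minpoly F (τ s) = minpoly F μ :=
      minpoly.eq_of_irreducible_of_monic hirrB hμB (minpoly.monic (LinearMap.isIntegral (τ s)))
    rw [h1, h2]
  obtain ⟨v₀, hv₀⟩ := exists_ne (0 : V)
  obtain ⟨w₀, hw₀⟩ := exists_ne (0 : W)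
  have hsV := evalMap_surjective (φ s) hAinv hv₀
  have hsW := evalMap_surjective (τ s) hBinv hw₀
  have hkk : LinearMap.ker (evalMap (φ s) v₀) = LinearMap.ker (evalMap (τ s) w₀) := by
    ext f
    simp only [LinearMap.mem_ker]
    rw [evalMap_eq_zero_iff (φ s) hirrA hv₀, evalMap_eq_zero_iff (τ s) hirrB hw₀, hEq]
  let eV := (evalMap (φ s) v₀).quotKerEquivOfSurjective hsV
  let eW := (evalMap (τ s) w₀).quotKerEquivOfSurjective hsW
  let qe := Submodule.quotEquivOfEq _ _ hkk
  let e : V ≃ₗ[F] W := eV.symm ≪≫ₗ qe ≪≫ₗ eW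
  have heV : ∀ f : Polynomial F, eV (Submodule.Quotient.mk f) = evalMap (φ s) v₀ f := by
    intro f
    simp [eV, LinearMap.quotKerEquivOfSurjective, LinearEquiv.trans_apply,
      LinearMap.quotKerEquivRange_apply_mk]
  have heW : ∀ f : Polynomial F, eW (Submodule.Quotient.mk f) = evalMap (τ s) w₀ f := by
    intro f
    simp [eW, LinearMap.quotKerEquivOfSurjective, LinearEquiv.trans_apply,
      LinearMap.quotKerEquivRange_apply_mk]
  have heLV : ∀ f : Polynomial F, e (evalMap (φ s) v₀ f) = evalMap (τ s) w₀ f := by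
    intro f
    have h1 : eV.symm (evalMap (φ s) v₀ f) = Submodule.Quotient.mk f := by
      rw [LinearEquiv.symm_apply_eq, heV]
    show eW (qe (eV.symm (evalMap (φ s) v₀ f))) = _
    rw [h1]
    rw [show qe (Submodule.Quotient.mk f) = Submodule.Quotient.mk f from
      Submodule.quotEquivOfEq_mk _ _ hkk f]
    exact heW f
  have hstep : ∀ v : V, e (φ s v) = τ s (e v) := by
    intro v
    obtain ⟨f, rfl⟩ := hsV v
    have h1 : φ s (evalMap (φ s) v₀ f) = evalMap (φ s) v₀ (Polynomial.X * f) := by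
      simp [evalMap_apply, map_mul, Module.End.mul_apply]
    have h2 : τ s (evalMap (τ s) w₀ f) = evalMap (τ s) w₀ (Polynomial.X * f) := by
      simp [evalMap_apply, map_mul, Module.End.mul_apply]
    rw [h1, heLV, heLV, h2]
  have hn : ∀ (n : ℕ) (v : V), e (((φ s) ^ n) v) = ((τ s) ^ n) (e v) := by
    intro n
    induction n with
    | zero => intro v; simp
    | succ n ih =>
      intro v
      rw [pow_succ, pow_succ, Module.End.mul_apply, Module.End.mul_apply, ih (φ s v), hstep v]
  refine ⟨e, ?_⟩
  intro g v
  obtain ⟨n, rfl⟩ := hpow g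
  rw [map_pow, map_pow]
  exact hn n v
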